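/- Let μ be a probability measure on ℝ and let F : ℝ → ℝ be its cumulative distribution function, F x = (μ (Iic x)).toReal. For c ∈ (0,1) define the quantile Q c = sInf {x ∈ ℝ | c ≤ F x} (this set is nonempty and bounded below since μ is a probability measure and 0 < c < 1). Then the pushforward under Q of the uniform probability measure on the interval (0,1) (Lebesgue measure restricted to (0,1)) equals μ; i.e. inverse-transform sampling from the uniform distribution reproduces μ. -/

import Mathlib

open MeasureTheory Set Filter Topology ProbabilityTheory

/-- Inverse-transform sampling: pushing the uniform measure on `(0,1)` forward through the
quantile function `Q c = sInf {x | c ≤ F x}` of a probability measure `μ` on `ℝ`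
reproduces `μ`. -/
theorem stmt8 (μ : Measure ℝ) [IsProbabilityMeasure μ]
    (F : ℝ → ℝ) (hF : ∀ x, F x = (μ (Iic x)).toReal)
    (Q : ℝ → ℝ) (hQ : ∀ c, Q c = sInf {x : ℝ | c ≤ F x}) :
    (volume.restrict (Ioo (0 : ℝ) 1)).map Q = μ := by
  have hFeq : ∀ x, F x = cdf μ x := fun x => (hF x).trans (cdf_eq_real μ x).symm
  -- key Galois property
  have key : ∀ c ∈ Ioo (0:ℝ) 1, ∀ x, Q c ≤ x ↔ c ≤ F x := by
    rintro c ⟨hc0, hc1⟩ x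
    have hne : {x : ℝ | c ≤ F x}.Nonempty := by
      obtain ⟨y, hy⟩ := ((tendsto_cdf_atTop μ).eventually (eventually_ge_nhds hc1)).exists
      exact ⟨y, by simpa [hFeq] using hy⟩
    have hbdd : BddBelow {x : ℝ | c ≤ F x} := by
      obtain ⟨z, hz⟩ := ((tendsto_cdf_atBot μ).eventually (eventually_lt_nhds hc0)).exists
      refine ⟨z, fun y hy => le_of_not_gt fun h => ?_⟩
      have : c ≤ cdf μ y := by simpa [hFeq] using hy
      exact absurd this (not_le.2 (lt_of_le_of_lt ((monotone_cdf μ) h.le) hz))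
    constructor
    · intro hQx
      have h1 : ∀ y ∈ Ioi x, c ≤ cdf μ y := by
        intro y hy
        obtain ⟨s, hsS, hsy⟩ := exists_lt_of_csInf_lt hne ((hQ c ▸ hQx).trans_lt hy)
        have : c ≤ cdf μ s := by simpa [hFeq] using hsS
        exact this.trans ((monotone_cdf μ) hsy.le)
      have h2 : Tendsto (cdf μ) (𝓝[>] x) (𝓝 (cdf μ x)) :=
        ((cdf μ).right_continuous x).mono_left (nhdsWithin_mono _ Ioi_subset_Ici_self)
      rw [hFeq]
      exact ge_of_tendsto h2 (eventually_mem_nhdsWithin.mono h1)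
    · intro hx
      exact hQ c ▸ csInf_le hbdd hx
  -- measurability
  have hmonoQ : MonotoneOn Q (Ioo (0:ℝ) 1) := by
    intro c hc c' hc' hcc'
    have h1 : c' ≤ F (Q c') := (key c' hc' (Q c')).1 le_rfl
    exact (key c hc (Q c')).2 (hcc'.trans h1)
  have hQmeas : AEMeasurable Q (volume.restrict (Ioo (0:ℝ) 1)) :=
    aemeasurable_restrict_of_monotoneOn measurableSet_Ioo hmonoQ
  refine Measure.ext_of_Iic _ _ (fun x => ?_)
  rw [Measure.map_apply_of_aemeasurable hQmeas measurableSet_Iic,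
    Measure.restrict_apply' measurableSet_Ioo]
  have hset : Q ⁻¹' (Iic x) ∩ Ioo 0 1 = Iic (F x) ∩ Ioo 0 1 := by
    ext c
    simp only [mem_inter_iff, mem_preimage, mem_Iic, and_congr_left_iff]
    intro hc
    exact key c hc x
  rw [hset, ← ofReal_cdf μ x]
  have h0 : 0 ≤ cdf μ x := cdf_nonneg μ x
  rcases eq_or_lt_of_le (cdf_le_one μ x) with h1 | h1
  · have : Iic (F x) ∩ Ioo (0:ℝ) 1 = Ioo 0 1 := by
      rw [inter_eq_right]
      intro y hy
      simp only [mem_Iic]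
      rw [hFeq, h1]
      exact hy.2.le
    rw [this, Real.volume_Ioo, h1]
    norm_num
  · have : Iic (F x) ∩ Ioo (0:ℝ) 1 = Ioc 0 (cdf μ x) := by
      ext y
      simp only [mem_inter_iff, mem_Iic, mem_Ioo, mem_Ioc, hFeq]
      constructor
      · rintro ⟨h, h', _⟩; exact ⟨h', h⟩
      · rintro ⟨h, h'⟩; exact ⟨h', h, h'.trans_lt h1⟩
    rw [this, Real.volume_Ioc]
    norm_num
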